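/- Let ℓ > 0 and 0 < ε < π/2. Then there exist constants K_ε > 0 and N₀ > 0 such that for every N > N₀ with N ∉ ⋃_{n∈ℤ} (nπ/ℓ − ε/ℓ, nπ/ℓ + ε/ℓ), every point k on the boundary of the square [−N,N] × [−N,N] in ℂ (i.e. the square contour with vertices N − iN, N + iN, −N + iN, −N − iN) satisfies e^{|Im k| ℓ} ≤ K_ε |sin(kℓ)|. -/

import Mathlib

open Real

lemma sq_norm_sin (z : ℂ) :
    ‖Complex.sin z‖ ^ 2 = Real.sin z.re ^ 2 * Real.cosh z.im ^ 2
      + Real.cos z.re ^ 2 * Real.sinh z.im ^ 2 := by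
  rw [Complex.sin_eq, ← Complex.ofReal_sin, ← Complex.ofReal_cos, ← Complex.ofReal_cosh,
    ← Complex.ofReal_sinh, ← Complex.ofReal_mul, ← Complex.ofReal_mul,
    Complex.norm_def, Complex.normSq_add_mul_I,
    Real.sq_sqrt (by positivity)]
  ring

lemma norm_sin_ge_abs_sin_re (z : ℂ) : |Real.sin z.re| ≤ ‖Complex.sin z‖ := by
  have h := sq_norm_sin z
  have h1 : (1:ℝ) ≤ Real.cosh z.im := Real.one_le_cosh z.im
  have hc : 1 ≤ Real.cosh z.im ^ 2 := by nlinarith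
  refine le_of_pow_le_pow_left₀ two_ne_zero (norm_nonneg _) ?_
  rw [sq_abs]
  nlinarith [sq_nonneg (Real.cos z.re * Real.sinh z.im),
    mul_le_mul_of_nonneg_left hc (sq_nonneg (Real.sin z.re))]

lemma norm_sin_ge_sinh (z : ℂ) : Real.sinh |z.im| ≤ ‖Complex.sin z‖ := by
  have h := sq_norm_sin z
  have h2 : Real.cosh z.im ^ 2 = 1 + Real.sinh z.im ^ 2 := by
    nlinarith [Real.cosh_sq_sub_sinh_sq z.im]
  have h3 : Real.sinh |z.im| ^ 2 = Real.sinh z.im ^ 2 := by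
    rcases abs_choice z.im with h | h <;> rw [h] <;> simp [Real.sinh_neg]
  refine le_of_pow_le_pow_left₀ two_ne_zero (norm_nonneg _) ?_
  rw [h3, h, h2]
  nlinarith [Real.sin_sq_add_cos_sq z.re, sq_nonneg (Real.sinh z.im), sq_nonneg (Real.sin z.re)]

lemma exp_le_four_sinh {t : ℝ} (ht : 1 ≤ t) : Real.exp t ≤ 4 * Real.sinh t := by
  rw [Real.sinh_eq]
  have h1 : Real.exp (-t) ≤ Real.exp (-1) := Real.exp_le_exp.2 (by linarith)
  have h2 : Real.exp (-1) * 4 ≤ Real.exp 1 := by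
    have he := Real.exp_one_gt_d9
    rw [Real.exp_neg, inv_mul_le_iff₀ (Real.exp_pos 1)]
    nlinarith
  have h3 : Real.exp 1 ≤ Real.exp t := Real.exp_le_exp.2 ht
  have h4 : 0 < Real.exp t := Real.exp_pos t
  linarith

lemma sin_eps_le_abs_sin {ε x : ℝ} (hε : 0 < ε) (hε' : ε ≤ π / 2)
    (hd : ∀ n : ℤ, ε ≤ |x - n * π|) : Real.sin ε ≤ |Real.sin x| := by
  have hπ : 0 < π := Real.pi_pos
  set n : ℤ := round (x / π) with hn
  set d : ℝ := x - n * π with hdd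
  have hd2 : |d| ≤ π / 2 := by
    have h0 := abs_sub_round (x / π)
    have h2 : |x / π - n| * π ≤ (1/2) * π := mul_le_mul_of_nonneg_right h0 hπ.le
    have h3 : |(x / π - n) * π| = |x / π - n| * π := by rw [abs_mul, abs_of_pos hπ]
    have h4 : (x / π - (n:ℝ)) * π = d := by rw [hdd]; field_simp
    rw [← h4, h3]
    linarith
  have hεd : ε ≤ |d| := hd n
  have hsx : |Real.sin x| = |Real.sin d| := by
    have hx : x = d + n * π := by rw [hdd]; ring
    conv_lhs => rw [hx, Real.sin_add_int_mul_pi]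
    have : |(-1:ℝ) ^ n| = 1 := by
      rcases Int.even_or_odd n with h | h
      · rw [h.neg_one_zpow]; simp
      · rw [h.neg_one_zpow]; simp
    rw [abs_mul, this, one_mul]
  have habs : |Real.sin d| = Real.sin |d| := by
    rcases le_or_gt 0 d with h | h
    · rw [abs_of_nonneg h] at hd2 ⊢
      rw [abs_of_nonneg (Real.sin_nonneg_of_nonneg_of_le_pi h (by linarith))]
    · have hd' : -d ≤ π / 2 := by rw [abs_of_neg h] at hd2; exact hd2
      rw [abs_of_neg h,
        abs_of_nonpos (Real.sin_nonpos_of_nonpos_of_neg_pi_le h.le (by linarith)),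
        ← Real.sin_neg]
  rw [hsx, habs]
  exact Real.sin_le_sin_of_le_of_le_pi_div_two (by linarith) hd2 hεd

theorem exp_le_abs_sin_on_square_contour
    (ℓ : ℝ) (hℓ : 0 < ℓ) (ε : ℝ) (hε : 0 < ε) (hε' : ε < π / 2) :
    ∃ K > 0, ∃ N₀ > 0, ∀ N : ℝ, N₀ < N →
      (∀ n : ℤ, N ∉ Set.Ioo (n * π / ℓ - ε / ℓ) (n * π / ℓ + ε / ℓ)) →
      ∀ k : ℂ, max |k.re| |k.im| = N →
        Real.exp (|k.im| * ℓ) ≤ K * ‖Complex.sin (k * ℓ)‖ := by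
  have hπ : 0 < π := Real.pi_pos
  have hsε : 0 < Real.sin ε := Real.sin_pos_of_pos_of_lt_pi hε (by linarith)
  refine ⟨max 4 (Real.exp 1 / Real.sin ε), lt_max_of_lt_left (by norm_num), max 1 (1/ℓ),
    lt_max_of_lt_left one_pos, fun N hN hforb k hk => ?_⟩
  set z : ℂ := k * ℓ with hz
  have hzre : z.re = k.re * ℓ := by simp [hz]
  have hzim : z.im = k.im * ℓ := by simp [hz]
  have hN1 : 1 < N := lt_of_le_of_lt (le_max_left _ _) hN
  have hNl : 1 ≤ N * ℓ := by
    have h : 1/ℓ < N := lt_of_le_of_lt (le_max_right _ _) hN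
    rw [div_lt_iff₀ hℓ] at h; linarith
  have hK4 : (4:ℝ) ≤ max 4 (Real.exp 1 / Real.sin ε) := le_max_left _ _
  have hKpos : (0:ℝ) < max 4 (Real.exp 1 / Real.sin ε) := by linarith
  have hsinh : Real.sinh |z.im| ≤ ‖Complex.sin z‖ := norm_sin_ge_sinh z
  have h2 : |z.im| = |k.im| * ℓ := by rw [hzim, abs_mul, abs_of_pos hℓ]
  rcases le_or_gt 1 (|k.im| * ℓ) with h1 | h1
  · have h3 := exp_le_four_sinh (t := |k.im| * ℓ) h1
    rw [← h2] at h3 ⊢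
    calc Real.exp |z.im| ≤ 4 * Real.sinh |z.im| := h3
      _ ≤ max 4 (Real.exp 1 / Real.sin ε) * ‖Complex.sin z‖ :=
          mul_le_mul hK4 hsinh (Real.sinh_nonneg_iff.2 (abs_nonneg _)) hKpos.le
  · have hkre : |k.re| = N := by
      rcases max_choice |k.re| |k.im| with h | h
      · rw [← hk, h]
      · exfalso
        have hN' : |k.im| = N := by rw [← hk, h]
        rw [hN'] at h1
        linarith
    have hdist : ∀ n : ℤ, ε ≤ |N * ℓ - n * π| := by
      intro n
      have hh := hforb n
      rw [Set.mem_Ioo, not_and_or, not_lt, not_lt] at hh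
      rcases hh with h | h
      · rw [← sub_div, le_div_iff₀ hℓ] at h
        exact le_abs.2 (Or.inr (by linarith))
      · rw [← add_div, div_le_iff₀ hℓ] at h
        exact le_abs.2 (Or.inl (by linarith))
    have hsinN : Real.sin ε ≤ |Real.sin (N * ℓ)| :=
      sin_eps_le_abs_sin hε hε'.le hdist
    have habs : |Real.sin z.re| = |Real.sin (N * ℓ)| := by
      rw [hzre, ← hkre]
      rcases abs_choice k.re with h | h
      · rw [h]
      · rw [h, neg_mul, Real.sin_neg, abs_neg]
    have hlow : Real.sin ε ≤ ‖Complex.sin z‖ := by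
      calc Real.sin ε ≤ |Real.sin z.re| := by rw [habs]; exact hsinN
        _ ≤ ‖Complex.sin z‖ := norm_sin_ge_abs_sin_re z
    have hKge : Real.exp 1 / Real.sin ε ≤ max 4 (Real.exp 1 / Real.sin ε) := le_max_right _ _
    calc Real.exp (|k.im| * ℓ) ≤ Real.exp 1 := Real.exp_le_exp.2 h1.le
      _ = (Real.exp 1 / Real.sin ε) * Real.sin ε := by field_simp
      _ ≤ max 4 (Real.exp 1 / Real.sin ε) * ‖Complex.sin z‖ :=
          mul_le_mul hKge hlow hsε.le hKpos.le
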